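/- (Limit of solution (4.1.2) to solution (4.2.2) as c → 0.) Let a, b, d ∈ ℝ, λ > 0, m ∈ (0,1], σ ≠ 0, d ≠ 0, and assume σ(b − 2d) > 0. Regard the coefficients j0(c), j2(c), k0(c), k2(c) of solution (4.1.2) with the bottom sign choice ε = −1 as functions of the parameter c. Then, as c → 0 with c ≠ 0: j2(c) → −12adλ²m²/(b−2d); k2(c) → 12dλ²m²σ; k0(c) → (a + σ²(b−2d)·(1 − 4dλ²(2m²−1)))/(σ(b−2d)); and j0(c) → (a² − σ²(b−2d)·(b − 2d(1 + 2aλ²(2m²−1))))/(σ²(b−2d)²). That is, the coefficients of solution (4.1.2) with the bottom signs converge to the corresponding coefficients of solution (4.2.2). -/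

import Mathlib

set_option maxHeartbeats 1000000

open Filter Topology

lemma key_j2 (a b c d lam m σ r : ℝ) (h : r^2 = 8*a*c + σ^2*(b-2*d)^2) :
    (4*a*c + b*σ^2*(b - 2*d) + (-1)*b*σ*r) * (r + σ*(b-2*d))
      = c * (4*a*(r + σ*(b-2*d) - 2*b*σ)) := by
  linear_combination (-(b*σ)) * h

lemma key_k0 (a b c d lam m σ r : ℝ) (h : r^2 = 8*a*c + σ^2*(b-2*d)^2) :
    (-8*b^2*c*lam^2*m^2*σ^2 - 32*c*d^2*lam^2*m^2*σ^2 - 32*a*c^2*lam^2*m^2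
          + 4*b^2*c*lam^2*σ^2 + 16*c*d^2*lam^2*σ^2 + 16*a*c^2*lam^2 - b^2*σ^2
          + 2*b*c*σ^2 + 2*b*d*σ^2 + 4*c*d*σ^2 - 4*a*c
          - (-1)*σ*r*(8*b*c*lam^2*m^2 + 16*c*d*lam^2*m^2 - 4*b*c*lam^2
            - 8*c*d*lam^2 + b - 2*c)) * (r + σ*(b-2*d))
      = c * (8*d*σ^2*r + -16*d^2*σ^3 + 32*d^2*lam^2*σ^2*r + -64*d^2*lam^2*m^2*σ^2*r + -64*d^3*lam^2*σ^3 + 128*d^3*lam^2*m^2*σ^3 + 8*b*d*σ^3 + 32*b*d^2*lam^2*σ^3 + -64*b*d^2*lam^2*m^2*σ^3 + -4*a*r + 8*a*d*σ + -16*a*c*σ + 16*a*c*lam^2*r + -32*a*c*lam^2*m^2*r + -96*a*c*d*lam^2*σ + 192*a*c*d*lam^2*m^2*σ + 4*a*b*σ + -16*a*b*c*lam^2*σ + 32*a*b*c*lam^2*m^2*σ) := by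
  linear_combination (-2*c*σ + -8*c*d*lam^2*σ + 16*c*d*lam^2*m^2*σ + 1*b*σ + -4*b*c*lam^2*σ + 8*b*c*lam^2*m^2*σ) * h

lemma key_j0 (a b c d lam m σ r : ℝ) (h : r^2 = 8*a*c + σ^2*(b-2*d)^2) :
    (-8*b^4*c*lam^2*m^2*σ^4 + 16*b^3*c*d*lam^2*m^2*σ^4
          - 64*a*b^2*c^2*lam^2*m^2*σ^2 - 32*a*b*c^2*d*lam^2*m^2*σ^2
          - 64*a*c^2*d^2*lam^2*m^2*σ^2 + 4*b^4*c*lam^2*σ^4 - 8*b^3*c*d*lam^2*σ^4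
          - 64*a^2*c^3*lam^2*m^2 + 32*a*b^2*c^2*lam^2*σ^2 + 16*a*b*c^2*d*lam^2*σ^2
          + 32*a*c^2*d^2*lam^2*σ^2 + b^4*σ^4 - 4*b^3*d*σ^4 + 4*b^2*d^2*σ^4
          + 32*a^2*c^3*lam^2 + 8*a*b^2*c*σ^2 - 8*a*b*c*d*σ^2 - 4*b^2*c^2*σ^2
          - 16*c^2*d^2*σ^2 + 8*a^2*c^2 - 16*a*c^3
          - (-1)*σ*r*(8*b^3*c*lam^2*m^2*σ^2 + 32*a*b*c^2*lam^2*m^2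
            + 32*a*c^2*d*lam^2*m^2 - 4*b^3*c*lam^2*σ^2 - 16*a*b*c^2*lam^2
            - 16*a*c^2*d*lam^2 - b^3*σ^2 + 2*b^2*d*σ^2 - 4*a*b*c + 4*b*c^2
            + 8*c^2*d)) * (r + σ*(b-2*d))^2
      = c^2 * (128*d^3*σ^3*r + -256*d^4*σ^4 + -64*b*d^2*σ^3*r + 256*b*d^3*σ^4 + -64*b^2*d^2*σ^4 + -256*a*d^3*lam^2*σ^3*r + 512*a*d^3*lam^2*m^2*σ^3*r + 512*a*d^4*lam^2*σ^4 + -1024*a*d^4*lam^2*m^2*σ^4 + 128*a*c*d*σ*r + -512*a*c*d^2*σ^2 + -256*a*b*d^3*lam^2*σ^4 + 512*a*b*d^3*lam^2*m^2*σ^4 + 128*a*b*c*d*σ^2 + -32*a^2*d*σ*r + 64*a^2*d^2*σ^2 + -256*a^2*c*d*lam^2*σ*r + 512*a^2*c*d*lam^2*m^2*σ*r + 1024*a^2*c*d^2*lam^2*σ^2 + -2048*a^2*c*d^2*lam^2*m^2*σ^2 + -128*a^2*c^2 + -16*a^2*b*σ*r + -64*a^2*b*c*lam^2*σ*r + 128*a^2*b*c*lam^2*m^2*σ*r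 + 128*a^2*b*c*d*lam^2*σ^2 + -256*a^2*b*c*d*lam^2*m^2*σ^2 + 16*a^2*b^2*σ^2 + 64*a^2*b^2*c*lam^2*σ^2 + -128*a^2*b^2*c*lam^2*m^2*σ^2 + 64*a^3*c + 256*a^3*c^2*lam^2 + -512*a^3*c^2*lam^2*m^2) := by
  linear_combination (8*c^2*d*σ*r + -48*c^2*d^2*σ^2 + 4*b*c^2*σ*r + 2*b^2*d*σ^3*r + -4*b^2*d^2*σ^4 + 4*b^2*c^2*σ^2 + -1*b^3*σ^3*r + 4*b^3*d*σ^4 + -4*b^3*c*lam^2*σ^3*r + 8*b^3*c*lam^2*m^2*σ^3*r + 8*b^3*c*d*lam^2*σ^4 + -16*b^3*c*d*lam^2*m^2*σ^4 + -1*b^4*σ^4 + -4*b^4*c*lam^2*σ^4 + 8*b^4*c*lam^2*m^2*σ^4 + -16*a*c^2*d*lam^2*σ*r + 32*a*c^2*d*lam^2*m^2*σ*r + 96*a*c^2*d^2*lam^2*σ^2 + -192*a*c^2*d^2*lam^2*m^2*σ^2 + -16*a*c^3 + -4*a*b*c*σ*r + 8*a*b*c*d*σ^2 + -16*a*b*c^2*lam^2*σ*r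 + 32*a*b*c^2*lam^2*m^2*σ*r + 48*a*b*c^2*d*lam^2*σ^2 + -96*a*b*c^2*d*lam^2*m^2*σ^2 + 8*a^2*c^2 + 32*a^2*c^3*lam^2 + -64*a^2*c^3*lam^2*m^2) * h


/-- as `c → 0` (with `c ≠ 0`), the coefficients of solution (4.1.2)
with the bottom sign choice `ε = -1` converge to the corresponding coefficients of
solution (4.2.2). -/
theorem abcd_solution_4_1_2_limits_to_4_2_2
    (a b d lam m σ : ℝ)
    (hlam : 0 < lam) (hm : m ∈ Set.Ioc (0 : ℝ) 1) (hσ : σ ≠ 0) (hd : d ≠ 0)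
    (hsgn : σ*(b - 2*d) > 0)
    (R : ℝ → ℝ) (hR : ∀ c : ℝ, R c = Real.sqrt (8*a*c + σ^2*(b - 2*d)^2)) :
    Tendsto (fun c : ℝ =>
        (3*lam^2*m^2/(2*c)) * (4*a*c + b*σ^2*(b - 2*d) + (-1)*b*σ*R c))
      (nhdsWithin 0 {(0:ℝ)}ᶜ) (nhds (-12*a*d*lam^2*m^2/(b - 2*d))) ∧
    Tendsto (fun c : ℝ => 3*lam^2*m^2 * (σ*(b + 2*d) + (-1)*R c))
      (nhdsWithin 0 {(0:ℝ)}ᶜ) (nhds (12*d*lam^2*m^2*σ)) ∧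
    Tendsto (fun c : ℝ =>
        (-8*b^2*c*lam^2*m^2*σ^2 - 32*c*d^2*lam^2*m^2*σ^2 - 32*a*c^2*lam^2*m^2
          + 4*b^2*c*lam^2*σ^2 + 16*c*d^2*lam^2*σ^2 + 16*a*c^2*lam^2 - b^2*σ^2
          + 2*b*c*σ^2 + 2*b*d*σ^2 + 4*c*d*σ^2 - 4*a*c
          - (-1)*σ*(R c)*(8*b*c*lam^2*m^2 + 16*c*d*lam^2*m^2 - 4*b*c*lam^2
            - 8*c*d*lam^2 + b - 2*c))
        / (2*c*(σ*(b + 2*d) + (-1)*R c)))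
      (nhdsWithin 0 {(0:ℝ)}ᶜ)
      (nhds ((a + σ^2*(b - 2*d)*(1 - 4*d*lam^2*(2*m^2 - 1))) / (σ*(b - 2*d)))) ∧
    Tendsto (fun c : ℝ =>
        (-8*b^4*c*lam^2*m^2*σ^4 + 16*b^3*c*d*lam^2*m^2*σ^4
          - 64*a*b^2*c^2*lam^2*m^2*σ^2 - 32*a*b*c^2*d*lam^2*m^2*σ^2
          - 64*a*c^2*d^2*lam^2*m^2*σ^2 + 4*b^4*c*lam^2*σ^4 - 8*b^3*c*d*lam^2*σ^4
          - 64*a^2*c^3*lam^2*m^2 + 32*a*b^2*c^2*lam^2*σ^2 + 16*a*b*c^2*d*lam^2*σ^2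
          + 32*a*c^2*d^2*lam^2*σ^2 + b^4*σ^4 - 4*b^3*d*σ^4 + 4*b^2*d^2*σ^4
          + 32*a^2*c^3*lam^2 + 8*a*b^2*c*σ^2 - 8*a*b*c*d*σ^2 - 4*b^2*c^2*σ^2
          - 16*c^2*d^2*σ^2 + 8*a^2*c^2 - 16*a*c^3
          - (-1)*σ*(R c)*(8*b^3*c*lam^2*m^2*σ^2 + 32*a*b*c^2*lam^2*m^2
            + 32*a*c^2*d*lam^2*m^2 - 4*b^3*c*lam^2*σ^2 - 16*a*b*c^2*lam^2
            - 16*a*c^2*d*lam^2 - b^3*σ^2 + 2*b^2*d*σ^2 - 4*a*b*c + 4*b*c^2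
            + 8*c^2*d))
        / (4*c^2*(4*a*c + σ^2*(b^2 + 4*d^2) + (-1)*σ*(b + 2*d)*R c)))
      (nhdsWithin 0 {(0:ℝ)}ᶜ)
      (nhds ((a^2 - σ^2*(b - 2*d)*(b - 2*d*(1 + 2*a*lam^2*(2*m^2 - 1))))
        / (σ^2*(b - 2*d)^2))) := by
  obtain ⟨hm0, hm1⟩ := hm
  have hK : 0 < σ*(b-2*d) := hsgn
  have hbd : b - 2*d ≠ 0 := by
    intro h; rw [h, mul_zero] at hK; exact lt_irrefl 0 hK
  have hRt : Tendsto R (𝓝 (0:ℝ)) (𝓝 (σ*(b-2*d))) := by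
    have hcont : Continuous (fun c : ℝ => Real.sqrt (8*a*c + σ^2*(b - 2*d)^2)) := by
      fun_prop
    have h0 : Real.sqrt (8*a*(0:ℝ) + σ^2*(b - 2*d)^2) = σ*(b-2*d) := by
      rw [show 8*a*(0:ℝ) + σ^2*(b - 2*d)^2 = (σ*(b-2*d))^2 by ring, Real.sqrt_sq hK.le]
    have h1 := hcont.tendsto 0
    rw [h0] at h1
    exact Tendsto.congr (fun c => (hR c).symm) h1
  have hRt' : Tendsto R (𝓝[≠] (0:ℝ)) (𝓝 (σ*(b-2*d))) := hRt.mono_left nhdsWithin_le_nhds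
  have hid : Tendsto (fun c : ℝ => c) (𝓝[≠] (0:ℝ)) (𝓝 0) :=
    tendsto_id.mono_left nhdsWithin_le_nhds
  have hRpos : ∀ c : ℝ, 0 < R c + σ*(b-2*d) := by
    intro c
    have h1 : 0 ≤ R c := by rw [hR c]; exact Real.sqrt_nonneg _
    linarith
  have hc0 : ∀ᶠ c in 𝓝[≠] (0:ℝ), c ≠ 0 := by
    filter_upwards [self_mem_nhdsWithin] with c hc
    simpa using hc
  have harg : ∀ᶠ c in 𝓝[≠] (0:ℝ), 0 < 8*a*c + σ^2*(b - 2*d)^2 := by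
    have h1 : Tendsto (fun c : ℝ => 8*a*c + σ^2*(b - 2*d)^2) (𝓝[≠] (0:ℝ))
        (𝓝 (8*a*0 + σ^2*(b - 2*d)^2)) := (hid.const_mul (8*a)).add tendsto_const_nhds
    have hpos : (0:ℝ) < 8*a*0 + σ^2*(b - 2*d)^2 := by
      rw [show 8*a*(0:ℝ) + σ^2*(b - 2*d)^2 = (σ*(b-2*d))^2 by ring]
      positivity
    exact h1.eventually (eventually_gt_nhds hpos)
  have hden1lim : Tendsto (fun c : ℝ => σ*(b + 2*d) + (-1)*R c) (𝓝[≠] (0:ℝ))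
      (𝓝 (σ*(b + 2*d) + (-1)*(σ*(b-2*d)))) := tendsto_const_nhds.add (hRt'.const_mul (-1))
  have h4d : σ*(b + 2*d) + (-1)*(σ*(b-2*d)) ≠ 0 := by
    rw [show σ*(b + 2*d) + (-1)*(σ*(b-2*d)) = 4*d*σ by ring]
    exact mul_ne_zero (mul_ne_zero (by norm_num) hd) hσ
  have hden1 : ∀ᶠ c in 𝓝[≠] (0:ℝ), σ*(b + 2*d) + (-1)*R c ≠ 0 :=
    hden1lim.eventually_ne h4d
  have hKK : σ*(b-2*d) + σ*(b-2*d) ≠ 0 := by positivity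
  have hrKt : Tendsto (fun c : ℝ => R c + σ*(b-2*d)) (𝓝[≠] (0:ℝ))
      (𝓝 (σ*(b-2*d) + σ*(b-2*d))) := hRt'.add tendsto_const_nhds
  refine ⟨?_, ?_, ?_, ?_⟩
  · -- j2
    have hnum : Tendsto (fun c : ℝ => 6*a*lam^2*m^2*(R c + σ*(b-2*d) - 2*b*σ))
        (𝓝[≠] (0:ℝ)) (𝓝 (6*a*lam^2*m^2*(σ*(b-2*d) + σ*(b-2*d) - 2*b*σ))) :=
      tendsto_const_nhds.mul ((hRt'.add tendsto_const_nhds).sub tendsto_const_nhds)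
    have hg := hnum.div hrKt hKK
    have hval : -12*a*d*lam^2*m^2/(b - 2*d)
        = 6*a*lam^2*m^2*(σ*(b-2*d) + σ*(b-2*d) - 2*b*σ) / (σ*(b-2*d) + σ*(b-2*d)) := by
      field_simp
      ring
    rw [hval]
    refine Tendsto.congr' ?_ hg
    filter_upwards [hc0, harg] with c hcne hargc
    have hr2 : (R c)^2 = 8*a*c + σ^2*(b - 2*d)^2 := by
      rw [hR c]; exact Real.sq_sqrt hargc.le
    have hrK : R c + σ*(b-2*d) ≠ 0 := (hRpos c).ne'
    have h2c : 2*c ≠ 0 := mul_ne_zero two_ne_zero hcne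
    simp only [Pi.div_apply]
    rw [div_mul_eq_mul_div, div_eq_div_iff hrK h2c]
    linear_combination (-(3*lam^2*m^2)) * key_j2 a b c d lam m σ (R c) hr2
  · -- k2
    have h : Tendsto (fun c : ℝ => 3*lam^2*m^2 * (σ*(b + 2*d) + (-1)*R c)) (𝓝[≠] (0:ℝ))
        (𝓝 (3*lam^2*m^2 * (σ*(b + 2*d) + (-1)*(σ*(b-2*d))))) :=
      tendsto_const_nhds.mul hden1lim
    convert h using 2
    ring
  · -- k0
    have hnum : Tendsto (fun c : ℝ => (-16*d^2*σ^3 + -64*d^3*lam^2*σ^3 + 128*d^3*lam^2*m^2*σ^3 + 8*b*d*σ^3 + 32*b*d^2*lam^2*σ^3 + -64*b*d^2*lam^2*m^2*σ^3 + 8*a*d*σ + 4*a*b*σ) + (-16*a*σ + -96*a*d*lam^2*σ + 192*a*d*lam^2*m^2*σ + -16*a*b*lam^2*σ + 32*a*b*lam^2*m^2*σ)*c + (8*d*σ^2 + 32*d^2*lam^2*σ^2 + -64*d^2*lam^2*m^2*σ^2 + -4*a)*R c + (16*a*lam^2 + -32*a*lam^2*m^2)*(c*R c))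
        (𝓝[≠] (0:ℝ)) (𝓝 ((-16*d^2*σ^3 + -64*d^3*lam^2*σ^3 + 128*d^3*lam^2*m^2*σ^3 + 8*b*d*σ^3 + 32*b*d^2*lam^2*σ^3 + -64*b*d^2*lam^2*m^2*σ^3 + 8*a*d*σ + 4*a*b*σ) + (-16*a*σ + -96*a*d*lam^2*σ + 192*a*d*lam^2*m^2*σ + -16*a*b*lam^2*σ + 32*a*b*lam^2*m^2*σ)*0 + (8*d*σ^2 + 32*d^2*lam^2*σ^2 + -64*d^2*lam^2*m^2*σ^2 + -4*a)*(σ*(b-2*d)) + (16*a*lam^2 + -32*a*lam^2*m^2)*(0*(σ*(b-2*d))))) :=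
      ((tendsto_const_nhds.add (hid.const_mul (-16*a*σ + -96*a*d*lam^2*σ + 192*a*d*lam^2*m^2*σ + -16*a*b*lam^2*σ + 32*a*b*lam^2*m^2*σ))).add
        (hRt'.const_mul (8*d*σ^2 + 32*d^2*lam^2*σ^2 + -64*d^2*lam^2*m^2*σ^2 + -4*a))).add ((hid.mul hRt').const_mul (16*a*lam^2 + -32*a*lam^2*m^2))
    have hdeng : Tendsto (fun c : ℝ => 2*(σ*(b + 2*d) + (-1)*R c)*(R c + σ*(b-2*d)))
        (𝓝[≠] (0:ℝ)) (𝓝 (2*(σ*(b + 2*d) + (-1)*(σ*(b-2*d)))*(σ*(b-2*d) + σ*(b-2*d)))) :=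
      (tendsto_const_nhds.mul hden1lim).mul hrKt
    have hdenne : 2*(σ*(b + 2*d) + (-1)*(σ*(b-2*d)))*(σ*(b-2*d) + σ*(b-2*d)) ≠ 0 :=
      mul_ne_zero (mul_ne_zero two_ne_zero h4d) hKK
    have hg := hnum.div hdeng hdenne
    have hfinal : Tendsto (fun c : ℝ => ((-16*d^2*σ^3 + -64*d^3*lam^2*σ^3 + 128*d^3*lam^2*m^2*σ^3 + 8*b*d*σ^3 + 32*b*d^2*lam^2*σ^3 + -64*b*d^2*lam^2*m^2*σ^3 + 8*a*d*σ + 4*a*b*σ) + (-16*a*σ + -96*a*d*lam^2*σ + 192*a*d*lam^2*m^2*σ + -16*a*b*lam^2*σ + 32*a*b*lam^2*m^2*σ)*c + (8*d*σ^2 + 32*d^2*lam^2*σ^2 + -64*d^2*lam^2*m^2*σ^2 + -4*a)*R c + (16*a*lam^2 + -32*a*lam^2*m^2)*(c*R c))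
        / (2*(σ*(b + 2*d) + (-1)*R c)*(R c + σ*(b-2*d)))) (𝓝[≠] (0:ℝ))
        (𝓝 ((a + σ^2*(b - 2*d)*(1 - 4*d*lam^2*(2*m^2 - 1))) / (σ*(b - 2*d)))) := by
      convert hg using 2
      · rfl
      rw [div_eq_div_iff hK.ne' hdenne]
      ring
    refine Tendsto.congr' ?_ hfinal
    filter_upwards [hc0, harg, hden1] with c hcne hargc hd1
    have hr2 : (R c)^2 = 8*a*c + σ^2*(b - 2*d)^2 := by
      rw [hR c]; exact Real.sq_sqrt hargc.le
    have hrK : R c + σ*(b-2*d) ≠ 0 := (hRpos c).ne'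
    rw [div_eq_div_iff (mul_ne_zero (mul_ne_zero two_ne_zero hd1) hrK)
      (mul_ne_zero (mul_ne_zero two_ne_zero hcne) hd1)]
    linear_combination (-(2*(σ*(b + 2*d) + (-1)*R c))) * key_k0 a b c d lam m σ (R c) hr2
  · -- j0
    have hnum : Tendsto (fun c : ℝ => (-256*d^4*σ^4 + 256*b*d^3*σ^4 + -64*b^2*d^2*σ^4 + 512*a*d^4*lam^2*σ^4 + -1024*a*d^4*lam^2*m^2*σ^4 + -256*a*b*d^3*lam^2*σ^4 + 512*a*b*d^3*lam^2*m^2*σ^4 + 64*a^2*d^2*σ^2 + 16*a^2*b^2*σ^2) + (-512*a*d^2*σ^2 + 128*a*b*d*σ^2 + 1024*a^2*d^2*lam^2*σ^2 + -2048*a^2*d^2*lam^2*m^2*σ^2 + 128*a^2*b*d*lam^2*σ^2 + -256*a^2*b*d*lam^2*m^2*σ^2 + 64*a^2*b^2*lam^2*σ^2 + -128*a^2*b^2*lam^2*m^2*σ^2 + 64*a^3)*c + (-128*a^2 + 256*a^3*lam^2 + -512*a^3*lam^2*m^2)*c^2 + (128*d^3*σ^3 + -64*b*d^2*σ^3 +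 -256*a*d^3*lam^2*σ^3 + 512*a*d^3*lam^2*m^2*σ^3 + -32*a^2*d*σ + -16*a^2*b*σ)*R c + (128*a*d*σ + -256*a^2*d*lam^2*σ + 512*a^2*d*lam^2*m^2*σ + -64*a^2*b*lam^2*σ + 128*a^2*b*lam^2*m^2*σ)*(c*R c))
        (𝓝[≠] (0:ℝ)) (𝓝 ((-256*d^4*σ^4 + 256*b*d^3*σ^4 + -64*b^2*d^2*σ^4 + 512*a*d^4*lam^2*σ^4 + -1024*a*d^4*lam^2*m^2*σ^4 + -256*a*b*d^3*lam^2*σ^4 + 512*a*b*d^3*lam^2*m^2*σ^4 + 64*a^2*d^2*σ^2 + 16*a^2*b^2*σ^2) + (-512*a*d^2*σ^2 + 128*a*b*d*σ^2 + 1024*a^2*d^2*lam^2*σ^2 + -2048*a^2*d^2*lam^2*m^2*σ^2 + 128*a^2*b*d*lam^2*σ^2 + -256*a^2*b*d*lam^2*m^2*σ^2 + 64*a^2*b^2*lam^2*σ^2 + -128*a^2*b^2*lam^2*m^2*σ^2 + 64*a^3)*0 + (-128*a^2 + 256*a^3*lam^2 + -512*a^3*lam^2*m^2)*(0:ℝ)^2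 + (128*d^3*σ^3 + -64*b*d^2*σ^3 + -256*a*d^3*lam^2*σ^3 + 512*a*d^3*lam^2*m^2*σ^3 + -32*a^2*d*σ + -16*a^2*b*σ)*(σ*(b-2*d)) + (128*a*d*σ + -256*a^2*d*lam^2*σ + 512*a^2*d*lam^2*m^2*σ + -64*a^2*b*lam^2*σ + 128*a^2*b*lam^2*m^2*σ)*(0*(σ*(b-2*d))))) :=
      (((tendsto_const_nhds.add (hid.const_mul (-512*a*d^2*σ^2 + 128*a*b*d*σ^2 + 1024*a^2*d^2*lam^2*σ^2 + -2048*a^2*d^2*lam^2*m^2*σ^2 + 128*a^2*b*d*lam^2*σ^2 + -256*a^2*b*d*lam^2*m^2*σ^2 + 64*a^2*b^2*lam^2*σ^2 + -128*a^2*b^2*lam^2*m^2*σ^2 + 64*a^3))).add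
        ((hid.pow 2).const_mul (-128*a^2 + 256*a^3*lam^2 + -512*a^3*lam^2*m^2))).add
        (hRt'.const_mul (128*d^3*σ^3 + -64*b*d^2*σ^3 + -256*a*d^3*lam^2*σ^3 + 512*a*d^3*lam^2*m^2*σ^3 + -32*a^2*d*σ + -16*a^2*b*σ))).add ((hid.mul hRt').const_mul (128*a*d*σ + -256*a^2*d*lam^2*σ + 512*a^2*d*lam^2*m^2*σ + -64*a^2*b*lam^2*σ + 128*a^2*b*lam^2*m^2*σ))
    have hE : Tendsto (fun c : ℝ => 4*a*c + σ^2*(b^2 + 4*d^2) + (-1)*σ*(b + 2*d)*R c)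
        (𝓝[≠] (0:ℝ)) (𝓝 (4*a*0 + σ^2*(b^2 + 4*d^2) + (-1)*σ*(b + 2*d)*(σ*(b-2*d)))) :=
      ((hid.const_mul (4*a)).add tendsto_const_nhds).add (hRt'.const_mul ((-1)*σ*(b + 2*d)))
    have hEne : 4*a*0 + σ^2*(b^2 + 4*d^2) + (-1)*σ*(b + 2*d)*(σ*(b-2*d)) ≠ 0 := by
      rw [show 4*a*(0:ℝ) + σ^2*(b^2 + 4*d^2) + (-1)*σ*(b + 2*d)*(σ*(b-2*d)) = 8*d^2*σ^2 by ring]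
      positivity
    have hden4 : ∀ᶠ c in 𝓝[≠] (0:ℝ), 4*a*c + σ^2*(b^2 + 4*d^2) + (-1)*σ*(b + 2*d)*R c ≠ 0 :=
      hE.eventually_ne hEne
    have hdeng : Tendsto (fun c : ℝ =>
        4*(4*a*c + σ^2*(b^2 + 4*d^2) + (-1)*σ*(b + 2*d)*R c)*(R c + σ*(b-2*d))^2)
        (𝓝[≠] (0:ℝ)) (𝓝 (4*(4*a*0 + σ^2*(b^2 + 4*d^2) + (-1)*σ*(b + 2*d)*(σ*(b-2*d)))
          *(σ*(b-2*d) + σ*(b-2*d))^2)) :=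
      (tendsto_const_nhds.mul hE).mul (hrKt.pow 2)
    have hdenne : 4*(4*a*0 + σ^2*(b^2 + 4*d^2) + (-1)*σ*(b + 2*d)*(σ*(b-2*d)))
        *(σ*(b-2*d) + σ*(b-2*d))^2 ≠ 0 :=
      mul_ne_zero (mul_ne_zero (by norm_num) hEne) (pow_ne_zero 2 hKK)
    have hg := hnum.div hdeng hdenne
    have hfinal : Tendsto (fun c : ℝ => ((-256*d^4*σ^4 + 256*b*d^3*σ^4 + -64*b^2*d^2*σ^4 + 512*a*d^4*lam^2*σ^4 + -1024*a*d^4*lam^2*m^2*σ^4 + -256*a*b*d^3*lam^2*σ^4 + 512*a*b*d^3*lam^2*m^2*σ^4 + 64*a^2*d^2*σ^2 + 16*a^2*b^2*σ^2) + (-512*a*d^2*σ^2 + 128*a*b*d*σ^2 + 1024*a^2*d^2*lam^2*σ^2 + -2048*a^2*d^2*lam^2*m^2*σ^2 + 128*a^2*b*d*lam^2*σ^2 + -256*a^2*b*d*lam^2*m^2*σ^2 + 64*a^2*b^2*lam^2*σ^2 + -128*a^2*b^2*lam^2*m^2*σ^2 + 64*a^3)*c + (-128*a^2 + 256*a^3*lam^2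 + -512*a^3*lam^2*m^2)*c^2 + (128*d^3*σ^3 + -64*b*d^2*σ^3 + -256*a*d^3*lam^2*σ^3 + 512*a*d^3*lam^2*m^2*σ^3 + -32*a^2*d*σ + -16*a^2*b*σ)*R c + (128*a*d*σ + -256*a^2*d*lam^2*σ + 512*a^2*d*lam^2*m^2*σ + -64*a^2*b*lam^2*σ + 128*a^2*b*lam^2*m^2*σ)*(c*R c))
        / (4*(4*a*c + σ^2*(b^2 + 4*d^2) + (-1)*σ*(b + 2*d)*R c)*(R c + σ*(b-2*d))^2))
        (𝓝[≠] (0:ℝ))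
        (𝓝 ((a^2 - σ^2*(b - 2*d)*(b - 2*d*(1 + 2*a*lam^2*(2*m^2 - 1))))
          / (σ^2*(b - 2*d)^2))) := by
      have hs2 : σ^2*(b - 2*d)^2 ≠ 0 := by positivity
      convert hg using 2
      · rfl
      rw [div_eq_div_iff hs2 hdenne]
      ring
    refine Tendsto.congr' ?_ hfinal
    filter_upwards [hc0, harg, hden4] with c hcne hargc hd4
    have hr2 : (R c)^2 = 8*a*c + σ^2*(b - 2*d)^2 := by
      rw [hR c]; exact Real.sq_sqrt hargc.le
    have hrK : R c + σ*(b-2*d) ≠ 0 := (hRpos c).ne'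
    rw [div_eq_div_iff (mul_ne_zero (mul_ne_zero (by norm_num : (4:ℝ) ≠ 0) hd4)
        (pow_ne_zero 2 hrK))
      (mul_ne_zero (mul_ne_zero (by norm_num : (4:ℝ) ≠ 0) (pow_ne_zero 2 hcne)) hd4)]
    linear_combination (-(4*(4*a*c + σ^2*(b^2 + 4*d^2) + (-1)*σ*(b + 2*d)*R c)))
      * key_j0 a b c d lam m σ (R c) hr2
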